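/- Define F₂(λ,l) = (G₀ c_B/√λ) · ( (√λ − l)/(√λ + 1) + (l − √(λ + l²))/(√(λ + l²) + √(1 + l²)) ). For every λ > 0, F₂(λ,l) → −∞ as l → +∞. -/

import Mathlib

theorem stmt_5 (G₀ c_B lam : ℝ) (hG : 0 < G₀) (hc : 0 < c_B) (hlam : 0 < lam)
    (F₂ : ℝ → ℝ)
    (hF₂ : ∀ l, F₂ l = (G₀ * c_B / Real.sqrt lam) *
      ((Real.sqrt lam - l) / (Real.sqrt lam + 1) +
       (l - Real.sqrt (lam + l ^ 2)) / (Real.sqrt (lam + l ^ 2) + Real.sqrt (1 + l ^ 2)))) :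
    Filter.Tendsto F₂ Filter.atTop Filter.atBot := by
  have hspos : 0 < Real.sqrt lam := Real.sqrt_pos.mpr hlam
  have hC : 0 < G₀ * c_B / Real.sqrt lam := by positivity
  have h1 : Filter.Tendsto
      (fun l : ℝ => (G₀ * c_B / Real.sqrt lam) * ((Real.sqrt lam - l) / (Real.sqrt lam + 1)))
      Filter.atTop Filter.atBot := by
    apply Filter.Tendsto.const_mul_atBot hC
    apply Filter.Tendsto.atBot_div_const (by positivity)
    exact (
      Filter.tendsto_atBot_add_const_left Filter.atTop (Real.sqrt lam)
        Filter.tendsto_neg_atTop_atBot).congr (fun x => (sub_eq_add_neg _ _).symm)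
  refine Filter.tendsto_atBot_mono (fun l => ?_) h1
  rw [hF₂ l]
  have hterm2 : (l - Real.sqrt (lam + l ^ 2)) / (Real.sqrt (lam + l ^ 2) + Real.sqrt (1 + l ^ 2)) ≤ 0 := by
    apply div_nonpos_of_nonpos_of_nonneg
    · have h1 : l ≤ |l| := le_abs_self l
      have h2 : |l| = Real.sqrt (l ^ 2) := (Real.sqrt_sq_eq_abs l).symm
      have h3 : Real.sqrt (l ^ 2) ≤ Real.sqrt (lam + l ^ 2) :=
        Real.sqrt_le_sqrt (by linarith)
      linarith
    · positivity
  nlinarith [hterm2, hC]
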